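/- Let X be a nonempty set, 𝒟 a vector lattice of bounded real-valued functions on X with the Stone property, and (ℰ,𝒟) a nonnegative definite symmetric bilinear form on which the unit contraction operates. For f ∈ 𝒟₀⁺ set K(f) := inf{ℰ(f,φ) : φ ∈ E_f}. Then K is a positive linear functional on the cone 𝒟₀⁺: K(f) ≥ 0 for every f ∈ 𝒟₀⁺; K(c·f) = c·K(f) for every f ∈ 𝒟₀⁺ and every c > 0; and K(f+g) = K(f) + K(g) for all f, g ∈ 𝒟₀⁺. -/

import Mathlib

open Filter Topology

open Pointwise

/-- The unit contraction `T₁(t) = min(max(t,0),1)`. -/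
def unitContraction (t : ℝ) : ℝ := min (max t 0) 1

/-- For a nonnegative `f`, the set `E_f` of functions `φ ∈ 𝒟` with `0 ≤ φ ≤ 1` and
`φ = 1` on `{f > 0}`. -/
def Efam {X : Type*} (𝒟 : Set (X → ℝ)) (f : X → ℝ) : Set (X → ℝ) :=
  {φ | φ ∈ 𝒟 ∧ (∀ x, 0 ≤ φ x ∧ φ x ≤ 1) ∧ (∀ x, 0 < f x → φ x = 1)}

/-- The cone `𝒟₀⁺` of nonnegative `f ∈ 𝒟` with `E_f ≠ ∅`. -/
def D0plus {X : Type*} (𝒟 : Set (X → ℝ)) : Set (X → ℝ) :=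
  {f | f ∈ 𝒟 ∧ (∀ x, 0 ≤ f x) ∧ (Efam 𝒟 f).Nonempty}

/-- The killing functional `K(f) = inf{ℰ(f,φ) : φ ∈ E_f}`. -/
noncomputable def killing {X : Type*} (𝒟 : Set (X → ℝ))
    (ℰ : (X → ℝ) → (X → ℝ) → ℝ) (f : X → ℝ) : ℝ :=
  sInf ((fun φ => ℰ f φ) '' Efam 𝒟 f)

/-- Theorem: the killing functional `K` is a positive linear functional on the
cone `𝒟₀⁺`. -/
theorem statement_6 {X : Type*} [Nonempty X] (𝒟 : Set (X → ℝ))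
    (ℰ : (X → ℝ) → (X → ℝ) → ℝ)
    (hbdd : ∀ f ∈ 𝒟, ∃ C : ℝ, ∀ x, |f x| ≤ C)
    (hadd : ∀ f ∈ 𝒟, ∀ g ∈ 𝒟, f + g ∈ 𝒟)
    (hsmul : ∀ c : ℝ, ∀ f ∈ 𝒟, c • f ∈ 𝒟)
    (hmax : ∀ f ∈ 𝒟, ∀ g ∈ 𝒟, (fun x => max (f x) (g x)) ∈ 𝒟)
    (hmin : ∀ f ∈ 𝒟, ∀ g ∈ 𝒟, (fun x => min (f x) (g x)) ∈ 𝒟)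
    (hstone : ∀ f ∈ 𝒟, (fun x => min (f x) 1) ∈ 𝒟)
    (hsym : ∀ f ∈ 𝒟, ∀ g ∈ 𝒟, ℰ f g = ℰ g f)
    (hlin_add : ∀ f ∈ 𝒟, ∀ g ∈ 𝒟, ∀ h ∈ 𝒟, ℰ (f + g) h = ℰ f h + ℰ g h)
    (hlin_smul : ∀ c : ℝ, ∀ f ∈ 𝒟, ∀ g ∈ 𝒟, ℰ (c • f) g = c * ℰ f g)
    (hnonneg : ∀ f ∈ 𝒟, 0 ≤ ℰ f f)
    (hT1 : ∀ f ∈ 𝒟, unitContraction ∘ f ∈ 𝒟 ∧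
      ℰ (unitContraction ∘ f) (unitContraction ∘ f) ≤ ℰ f f) :
    (∀ f ∈ D0plus 𝒟, 0 ≤ killing 𝒟 ℰ f) ∧
    (∀ f ∈ D0plus 𝒟, ∀ c : ℝ, 0 < c → killing 𝒟 ℰ (c • f) = c * killing 𝒟 ℰ f) ∧
    (∀ f ∈ D0plus 𝒟, ∀ g ∈ D0plus 𝒟,
      killing 𝒟 ℰ (f + g) = killing 𝒟 ℰ f + killing 𝒟 ℰ g) := by
  classical
  -- closure of 𝒟 under linear combinations
  have hcomb : ∀ a ∈ 𝒟, ∀ b ∈ 𝒟, ∀ s t : ℝ, s • a + t • b ∈ 𝒟 := fun a ha b hb s t =>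
    hadd _ (hsmul s a ha) _ (hsmul t b hb)
  -- cross term for scalars
  have cross : ∀ a ∈ 𝒟, ∀ b ∈ 𝒟, ∀ s t : ℝ, ℰ (s • a) (t • b) = s * t * ℰ a b := by
    intro a ha b hb s t
    rw [hlin_smul s a ha _ (hsmul t b hb), hsym a ha _ (hsmul t b hb),
      hlin_smul t b hb a ha, hsym b hb a ha]
    ring
  -- expansion of the quadratic form
  have expand : ∀ a ∈ 𝒟, ∀ b ∈ 𝒟, ∀ s t : ℝ,
      ℰ (s • a + t • b) (s • a + t • b)
        = s ^ 2 * ℰ a a + 2 * (s * t) * ℰ a b + t ^ 2 * ℰ b b := by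
    intro a ha b hb s t
    have hsa := hsmul s a ha
    have htb := hsmul t b hb
    have hu := hadd _ hsa _ htb
    rw [hlin_add _ hsa _ htb _ hu, hsym _ hsa _ hu, hsym _ htb _ hu,
      hlin_add _ hsa _ htb _ hsa, hlin_add _ hsa _ htb _ htb,
      hsym _ htb _ hsa, cross a ha a ha s s, cross a ha b hb s t, cross b hb b hb t t]
    ring
  have contr : ∀ u ∈ 𝒟, ∀ v : X → ℝ, (∀ x, unitContraction (u x) = v x) →
      ℰ v v ≤ ℰ u u := by
    intro u hu v hv
    have h1 := (hT1 u hu).2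
    have h2 : unitContraction ∘ u = v := funext hv
    rwa [h2] at h1
  -- Lemma L1 : for φ ∈ E_f, ℰ f φ ≥ 0
  have L1 : ∀ f ∈ 𝒟, (∀ x, 0 ≤ f x) → ∀ φ ∈ Efam 𝒟 f, 0 ≤ ℰ f φ := by
    intro f hf hf0 φ hφ
    obtain ⟨hφD, hφ01, hφ1⟩ := hφ
    have key : ∀ t : ℝ, 0 < t → 0 ≤ 2 * t * ℰ f φ + t ^ 2 * ℰ f f := by
      intro t ht
      have hu : (1 : ℝ) • φ + t • f ∈ 𝒟 := hcomb φ hφD f hf 1 t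
      have hcf : ∀ x, unitContraction (((1 : ℝ) • φ + t • f) x) = ((1 : ℝ) • φ) x := by
        intro x
        have h01 := hφ01 x
        simp only [Pi.add_apply, Pi.smul_apply, smul_eq_mul, one_mul, unitContraction]
        rcases (hf0 x).lt_or_eq with hx | hx
        · rw [hφ1 x hx]
          rw [max_eq_left (by nlinarith), min_eq_right (by nlinarith)]
        · rw [← hx, mul_zero, add_zero, max_eq_left h01.1, min_eq_left h01.2]
      have hle : ℰ ((1 : ℝ) • φ) ((1 : ℝ) • φ) ≤ ℰ ((1 : ℝ) • φ + t • f) ((1 : ℝ) • φ + t • f) :=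
        contr _ hu _ hcf
      rw [expand φ hφD f hf 1 t, cross φ hφD φ hφD 1 1] at hle
      have hsymfp := hsym φ hφD f hf
      nlinarith [hle]
    by_contra hneg
    push_neg at hneg
    have hB := hnonneg f hf
    set A := ℰ f φ with hA
    set B := ℰ f f with hBdef
    have hB1 : (0 : ℝ) < B + 1 := by linarith
    have ht : 0 < -A / (B + 1) := div_pos (by linarith) hB1
    have h2 := key _ ht
    have h3 : 0 ≤ (2 * (-A / (B + 1)) * A + (-A / (B + 1)) ^ 2 * B) * (B + 1) ^ 2 :=
      mul_nonneg h2 (by positivity)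
    have h4 : (2 * (-A / (B + 1)) * A + (-A / (B + 1)) ^ 2 * B) * (B + 1) ^ 2
        = A ^ 2 * (-(B + 2)) := by
      field_simp
      ring
    rw [h4] at h3
    nlinarith [h3, mul_pos_of_neg_of_neg hneg hneg, hB]
  -- Lemma L2 : if 0 ≤ h ≤ 1 vanishes on {f > 0}, then ℰ f h ≤ 0
  have L2 : ∀ f ∈ 𝒟, (∀ x, 0 ≤ f x) → ∀ h ∈ 𝒟,
      (∀ x, 0 ≤ h x ∧ h x ≤ 1) → (∀ x, 0 < f x → h x = 0) → ℰ f h ≤ 0 := by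
    intro f hf hf0 h hhD hh01 hh0
    obtain ⟨C, hC⟩ := hbdd f hf
    set M := max C 1 with hM
    have hM1 : (0 : ℝ) < M := lt_of_lt_of_le one_pos (le_max_right _ _)
    set t₀ := 1 / M with ht₀def
    have ht₀ : 0 < t₀ := by positivity
    have hft : ∀ x, 0 ≤ t₀ * f x ∧ t₀ * f x ≤ 1 := by
      intro x
      constructor
      · exact mul_nonneg ht₀.le (hf0 x)
      · have h1 : f x ≤ M := le_trans (le_abs_self _) (le_trans (hC x) (le_max_left _ _))
        calc t₀ * f x ≤ t₀ * M := by
              exact mul_le_mul_of_nonneg_left h1 ht₀.le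
          _ = 1 := by rw [ht₀def, one_div, inv_mul_cancel₀ hM1.ne']
    have key : ∀ ε : ℝ, 0 < ε → 2 * t₀ * ℰ f h ≤ ε * ℰ h h := by
      intro ε hε
      have hu : t₀ • f + (-ε) • h ∈ 𝒟 := hcomb f hf h hhD t₀ (-ε)
      have hcf : ∀ x, unitContraction ((t₀ • f + (-ε) • h) x) = (t₀ • f) x := by
        intro x
        have h01 := hh01 x
        have hfx := hft x
        simp only [Pi.add_apply, Pi.smul_apply, smul_eq_mul, unitContraction, neg_mul]
        rcases (hf0 x).lt_or_eq with hx | hx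
        · rw [hh0 x hx, mul_zero, neg_zero, add_zero,
            max_eq_left hfx.1, min_eq_left hfx.2]
        · rw [← hx, mul_zero, zero_add]
          rw [max_eq_right (by nlinarith), min_eq_left (by norm_num)]
      have hle : ℰ (t₀ • f) (t₀ • f) ≤ ℰ (t₀ • f + (-ε) • h) (t₀ • f + (-ε) • h) :=
        contr _ hu _ hcf
      rw [expand f hf h hhD t₀ (-ε), cross f hf f hf t₀ t₀] at hle
      have h5 : ε * (2 * t₀ * ℰ f h) ≤ ε * (ε * ℰ h h) := by nlinarith [hle]
      exact (mul_le_mul_iff_right₀ hε).mp h5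
    by_contra hpos
    push_neg at hpos
    have hB := hnonneg h hhD
    set A := ℰ f h with hA
    set B := ℰ h h with hBdef
    have hB1 : (0 : ℝ) < B + 1 := by linarith
    have hε : 0 < 2 * t₀ * A / (B + 1) := by positivity
    have h2 := key _ hε
    have h6 : 2 * t₀ * A * (B + 1) ≤ (2 * t₀ * A / (B + 1) * B) * (B + 1) :=
      mul_le_mul_of_nonneg_right h2 hB1.le
    have h7 : (2 * t₀ * A / (B + 1) * B) * (B + 1) = 2 * t₀ * A * B := by
      field_simp
    rw [h7] at h6
    nlinarith [mul_pos ht₀ hpos]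
  -- basic facts about the image sets
  have Snn : ∀ f ∈ D0plus 𝒟, ∀ b ∈ (fun φ => ℰ f φ) '' Efam 𝒟 f, 0 ≤ b := by
    rintro f ⟨hfD, hf0, -⟩ b ⟨φ, hφ, rfl⟩
    exact L1 f hfD hf0 φ hφ
  have Sne : ∀ f ∈ D0plus 𝒟, ((fun φ => ℰ f φ) '' Efam 𝒟 f).Nonempty :=
    fun f hf => hf.2.2.image _
  have Sbdd : ∀ f ∈ D0plus 𝒟, BddBelow ((fun φ => ℰ f φ) '' Efam 𝒟 f) :=
    fun f hf => ⟨0, fun b hb => Snn f hf b hb⟩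
  refine ⟨?_, ?_, ?_⟩
  · -- nonnegativity
    intro f hf
    exact le_csInf (Sne f hf) (Snn f hf)
  · -- homogeneity
    intro f hf c hc
    have hEeq : Efam 𝒟 (c • f) = Efam 𝒟 f := by
      ext φ
      simp only [Efam, Set.mem_setOf_eq, Pi.smul_apply, smul_eq_mul]
      constructor
      · rintro ⟨h1, h2, h3⟩
        exact ⟨h1, h2, fun x hx => h3 x (mul_pos hc hx)⟩
      · rintro ⟨h1, h2, h3⟩
        refine ⟨h1, h2, fun x hx => h3 x ?_⟩
        by_contra hcon
        push_neg at hcon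
        nlinarith
    unfold killing
    rw [hEeq]
    have himg : (fun φ => ℰ (c • f) φ) '' Efam 𝒟 f
        = (fun r => c * r) '' ((fun φ => ℰ f φ) '' Efam 𝒟 f) := by
      rw [Set.image_image]
      exact Set.image_congr fun φ hφ => hlin_smul c f hf.1 φ hφ.1
    have hsm : (fun r => c * r) '' ((fun φ => ℰ f φ) '' Efam 𝒟 f)
        = c • ((fun φ => ℰ f φ) '' Efam 𝒟 f) := by
      ext r
      simp [Set.mem_smul_set, smul_eq_mul, eq_comm]
    rw [himg, hsm, Real.sInf_smul_of_nonneg hc.le, smul_eq_mul]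
  · -- additivity
    intro f hf g hg
    have hfD := hf.1; have hf0 := hf.2.1; have hfE := hf.2.2
    have hgD := hg.1; have hg0 := hg.2.1; have hgE := hg.2.2
    have hfgD : f + g ∈ 𝒟 := hadd f hfD g hgD
    have hfg0 : ∀ x, 0 ≤ (f + g) x := fun x => add_nonneg (hf0 x) (hg0 x)
    have hsubf : Efam 𝒟 (f + g) ⊆ Efam 𝒟 f := by
      rintro φ ⟨h1, h2, h3⟩
      refine ⟨h1, h2, fun x hx => h3 x ?_⟩
      have := hg0 x
      simp only [Pi.add_apply]
      linarith
    have hsubg : Efam 𝒟 (f + g) ⊆ Efam 𝒟 g := by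
      rintro φ ⟨h1, h2, h3⟩
      refine ⟨h1, h2, fun x hx => h3 x ?_⟩
      have := hf0 x
      simp only [Pi.add_apply]
      linarith
    have hmaxE : ∀ φ ∈ Efam 𝒟 f, ∀ ψ ∈ Efam 𝒟 g,
        (fun x => max (φ x) (ψ x)) ∈ Efam 𝒟 (f + g) := by
      rintro φ ⟨hφD, hφ01, hφ1⟩ ψ ⟨hψD, hψ01, hψ1⟩
      refine ⟨hmax φ hφD ψ hψD,
        fun x => ⟨le_max_of_le_left (hφ01 x).1, max_le (hφ01 x).2 (hψ01 x).2⟩, ?_⟩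
      intro x hx
      show max (φ x) (ψ x) = 1
      simp only [Pi.add_apply] at hx
      have hor : 0 < f x ∨ 0 < g x := by
        by_contra hcon
        push_neg at hcon
        linarith [hcon.1, hcon.2]
      rcases hor with hor | hor
      · rw [hφ1 x hor]
        exact max_eq_left (hψ01 x).2
      · rw [hψ1 x hor]
        exact max_eq_right (hφ01 x).2
    obtain ⟨φ₀, hφ₀⟩ := hfE
    obtain ⟨ψ₀, hψ₀⟩ := hgE
    have hfg : f + g ∈ D0plus 𝒟 := ⟨hfgD, hfg0, ⟨_, hmaxE φ₀ hφ₀ ψ₀ hψ₀⟩⟩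
    apply le_antisymm
    · -- K(f+g) ≤ K f + K g
      apply le_of_forall_pos_le_add
      intro ε hε
      obtain ⟨bf, ⟨φ, hφ, rfl⟩, hbf⟩ := exists_lt_of_csInf_lt (Sne f hf)
        (lt_add_of_pos_right (killing 𝒟 ℰ f) (half_pos hε))
      obtain ⟨bg, ⟨ψ, hψ, rfl⟩, hbg⟩ := exists_lt_of_csInf_lt (Sne g hg)
        (lt_add_of_pos_right (killing 𝒟 ℰ g) (half_pos hε))
      set χ := fun x => max (φ x) (ψ x) with hχdef
      have hχ := hmaxE φ hφ ψ hψ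
      have hχD := hχ.1
      have h1 : killing 𝒟 ℰ (f + g) ≤ ℰ (f + g) χ :=
        csInf_le (Sbdd (f + g) hfg) ⟨χ, hχ, rfl⟩
      have hexp : ℰ (f + g) χ = ℰ f χ + ℰ g χ := hlin_add f hfD g hgD χ hχD
      -- generic: for u ∈ {f, g} with witness θ ∈ E_u, ℰ u χ ≤ ℰ u θ
      have step : ∀ u ∈ 𝒟, (∀ x, 0 ≤ u x) → ∀ θ ∈ Efam 𝒟 u,
          (∀ x, θ x ≤ χ x) → (∀ x, 0 < u x → χ x = 1) → ℰ u χ ≤ ℰ u θ := by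
        rintro u huD hu0 θ ⟨hθD, hθ01, hθ1⟩ hθχ hχ1
        have hhD : χ + (-1 : ℝ) • θ ∈ 𝒟 := hadd _ hχD _ (hsmul _ _ hθD)
        have e2 : θ + (χ + (-1 : ℝ) • θ) = χ := by
          funext x
          simp only [Pi.add_apply, Pi.smul_apply, smul_eq_mul]
          ring
        have e1 : ℰ (θ + (χ + (-1 : ℝ) • θ)) u = ℰ θ u + ℰ (χ + (-1 : ℝ) • θ) u :=
          hlin_add θ hθD _ hhD u huD
        rw [e2] at e1
        have hsplit : ℰ u χ = ℰ u θ + ℰ u (χ + (-1 : ℝ) • θ) := by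
          rw [hsym u huD χ hχD, e1, hsym θ hθD u huD, hsym _ hhD u huD]
        have hneg : ℰ u (χ + (-1 : ℝ) • θ) ≤ 0 := by
          apply L2 u huD hu0 _ hhD
          · intro x
            have h1x := hθ01 x
            have h2x := hθχ x
            have h3x : χ x ≤ 1 := (hχ.2.1 x).2
            simp only [Pi.add_apply, Pi.smul_apply, smul_eq_mul]
            constructor <;> nlinarith
          · intro x hx
            simp only [Pi.add_apply, Pi.smul_apply, smul_eq_mul]
            rw [hχ1 x hx, hθ1 x hx]
            ring
        linarith
      have hfχ : ℰ f χ ≤ ℰ f φ := by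
        apply step f hfD hf0 φ hφ (fun x => le_max_left _ _)
        intro x hx
        have : 0 < (f + g) x := by simp only [Pi.add_apply]; linarith [hg0 x]
        exact hχ.2.2 x this
      have hgχ : ℰ g χ ≤ ℰ g ψ := by
        apply step g hgD hg0 ψ hψ (fun x => le_max_right _ _)
        intro x hx
        have : 0 < (f + g) x := by simp only [Pi.add_apply]; linarith [hf0 x]
        exact hχ.2.2 x this
      linarith
    · -- K f + K g ≤ K(f+g)
      apply le_csInf (Sne (f + g) hfg)
      rintro b ⟨φ, hφ, rfl⟩
      have e : ℰ (f + g) φ = ℰ f φ + ℰ g φ := hlin_add f hfD g hgD φ hφ.1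
      have h1 : killing 𝒟 ℰ f ≤ ℰ f φ := csInf_le (Sbdd f hf) ⟨φ, hsubf hφ, rfl⟩
      have h2 : killing 𝒟 ℰ g ≤ ℰ g φ := csInf_le (Sbdd g hg) ⟨φ, hsubg hφ, rfl⟩
      simp only
      rw [e]
      linarith
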